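/- Let n ≥ 2 and m ≥ 1 be integers, let X : ℝⁿ → ℝⁿ be a polynomial vector field of degree m, and let B ⊂ ℝⁿ be a closed ball centered at the origin. Then for every ε > 0 there exist a polynomial vector field X̃ : ℝⁿ → ℝⁿ of degree at most m with sup_{x ∈ B} ‖X̃(x) − X(x)‖ < ε, a point p ∈ ℝⁿ \ B with X̃(p) ≠ 0, and an affine hyperplane Σ ⊂ ℝⁿ such that the straight line {p + λ·X̃(p) : λ ∈ ℝ} is contained in Σ and Σ ∩ B = ∅. -/

import Mathlib

theorem evalLine (n : ℕ) (i₀ : Fin n) (q : MvPolynomial (Fin n) ℝ) (t : ℝ) :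
    Polynomial.eval t (MvPolynomial.aeval (fun j => if j = i₀ then Polynomial.X else 0) q)
      = MvPolynomial.eval (fun j => if j = i₀ then t else (0:ℝ)) q := by
  have h := MvPolynomial.comp_aeval_apply (Polynomial.aeval t)
    (f := fun j : Fin n => if j = i₀ then Polynomial.X else (0 : Polynomial ℝ)) q
  simp only [Polynomial.aeval_def, Algebra.algebraMap_self] at h
  rw [show (Polynomial.eval t : Polynomial ℝ → ℝ) = Polynomial.eval₂ (RingHom.id ℝ) t from rfl, h]
  rw [show (MvPolynomial.eval (fun j => if j = i₀ then t else (0:ℝ)) q) =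
    MvPolynomial.eval₂ (RingHom.id ℝ) (fun j => if j = i₀ then t else (0:ℝ)) q from rfl,
    show ((MvPolynomial.aeval fun i => Polynomial.eval₂ (RingHom.id ℝ) t
      (if i = i₀ then Polynomial.X else 0)) q) =
     MvPolynomial.eval₂ (RingHom.id ℝ) (fun i => Polynomial.eval₂ (RingHom.id ℝ) t
      (if i = i₀ then Polynomial.X else 0)) q from ?_]
  · congr 1; funext j; split <;> simp
  · rw [MvPolynomial.aeval_def]; rfl

theorem growthBound (n m : ℕ) (i₀ : Fin n) (q : MvPolynomial (Fin n) ℝ)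
    (hq : q.totalDegree ≤ m) :
    ∃ C : ℝ, 0 ≤ C ∧ ∀ t : ℝ, 1 ≤ t →
      |MvPolynomial.eval (fun j => if j = i₀ then t else (0:ℝ)) q| ≤ C * t ^ m := by
  refine ⟨∑ s ∈ q.support, |q.coeff s|, Finset.sum_nonneg fun s _ => abs_nonneg _, fun t ht => ?_⟩
  have ht0 : (0:ℝ) ≤ t := le_trans zero_le_one ht
  rw [MvPolynomial.eval_eq]
  calc |∑ s ∈ q.support, q.coeff s * ∏ i ∈ s.support, (if i = i₀ then t else 0) ^ s i|
      ≤ ∑ s ∈ q.support, |q.coeff s * ∏ i ∈ s.support, (if i = i₀ then t else 0) ^ s i| :=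
        Finset.abs_sum_le_sum_abs _ _
    _ ≤ ∑ s ∈ q.support, |q.coeff s| * t ^ m := by
        refine Finset.sum_le_sum fun s hs => ?_
        rw [abs_mul]
        refine mul_le_mul_of_nonneg_left ?_ (abs_nonneg _)
        calc |∏ i ∈ s.support, (if i = i₀ then t else 0) ^ s i|
            ≤ ∏ i ∈ s.support, t ^ s i := by
              rw [Finset.abs_prod]
              refine Finset.prod_le_prod (fun _ _ => abs_nonneg _) fun i _ => ?_
              rw [abs_pow]
              refine pow_le_pow_left₀ (abs_nonneg _) ?_ _
              split <;> simp [abs_of_nonneg ht0, ht0]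
          _ = t ^ (∑ i ∈ s.support, s i) := by rw [Finset.prod_pow_eq_pow_sum]
          _ ≤ t ^ m := pow_le_pow_right₀ ht (le_trans (MvPolynomial.le_totalDegree hs) hq)
    _ = (∑ s ∈ q.support, |q.coeff s|) * t ^ m := by rw [Finset.sum_mul]

theorem coordBound (n : ℕ) (x : EuclideanSpace ℝ (Fin n)) (i : Fin n) : |x i| ≤ ‖x‖ := by
  rw [EuclideanSpace.norm_eq]
  calc |x i| = Real.sqrt (‖x i‖ ^ 2) := by rw [Real.norm_eq_abs, Real.sqrt_sq_eq_abs, abs_abs]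
    _ ≤ Real.sqrt (∑ j, ‖x j‖ ^ 2) := Real.sqrt_le_sqrt
        (Finset.single_le_sum (f := fun j => ‖x j‖ ^ 2) (fun j _ => sq_nonneg _)
          (Finset.mem_univ i))

set_option maxHeartbeats 1600000 in
theorem stmt_0 (n m : ℕ) (hn : 2 ≤ n) (hm : 1 ≤ m)
    (X : Fin n → MvPolynomial (Fin n) ℝ)
    (hX : ∀ i, (X i).totalDegree ≤ m)
    (R : ℝ) (hR : 0 < R) (ε : ℝ) (hε : 0 < ε) :
    ∃ X' : Fin n → MvPolynomial (Fin n) ℝ,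
      (∀ i, (X' i).totalDegree ≤ m) ∧
      (∀ x ∈ Metric.closedBall (0 : EuclideanSpace ℝ (Fin n)) R,
        ‖(EuclideanSpace.equiv (Fin n) ℝ).symm
            (fun i => MvPolynomial.eval (EuclideanSpace.equiv (Fin n) ℝ x) (X' i)) -
          (EuclideanSpace.equiv (Fin n) ℝ).symm
            (fun i => MvPolynomial.eval (EuclideanSpace.equiv (Fin n) ℝ x) (X i))‖ < ε) ∧
      ∃ p : EuclideanSpace ℝ (Fin n),
        p ∉ Metric.closedBall (0 : EuclideanSpace ℝ (Fin n)) R ∧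
        (EuclideanSpace.equiv (Fin n) ℝ).symm
            (fun i => MvPolynomial.eval (EuclideanSpace.equiv (Fin n) ℝ p) (X' i)) ≠ 0 ∧
        ∃ (f : EuclideanSpace ℝ (Fin n) →ₗ[ℝ] ℝ) (c : ℝ),
          f ≠ 0 ∧
          (∀ lam : ℝ,
            f (p + lam • (EuclideanSpace.equiv (Fin n) ℝ).symm
                (fun i => MvPolynomial.eval (EuclideanSpace.equiv (Fin n) ℝ p) (X' i))) = c) ∧
          (∀ x ∈ Metric.closedBall (0 : EuclideanSpace ℝ (Fin n)) R, f x ≠ c) := by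
  classical
  set i₀ : Fin n := ⟨0, by omega⟩ with hi₀
  set i₁ : Fin n := ⟨1, by omega⟩ with hi₁
  have hne : i₁ ≠ i₀ := by simp [hi₀, hi₁, Fin.ext_iff]
  set σp : Fin n → Polynomial ℝ := fun j => if j = i₀ then Polynomial.X else 0 with hσp
  set P : Polynomial ℝ := MvPolynomial.aeval σp (X i₁) with hP
  set a : ℝ := P.coeff m with ha
  have hRm : (0:ℝ) < R ^ m := pow_pos hR m
  set d₀ : ℝ := ε / (2 * R ^ m) with hd₀def
  have hd₀ : 0 < d₀ := by positivity
  set δ : ℝ := if a = -d₀ then d₀ / 2 else d₀ with hδdef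
  have hδpos : 0 < δ := by rw [hδdef]; split <;> positivity
  have hδle : δ ≤ d₀ := by rw [hδdef]; split <;> linarith
  have hsum : a + δ ≠ 0 := by
    rw [hδdef]; split
    · rename_i h; rw [h]; intro hc; nlinarith
    · rename_i h; intro hc; apply h; linarith
  set X' : Fin n → MvPolynomial (Fin n) ℝ :=
    fun i => if i = i₁ then X i₁ + MvPolynomial.C δ * (MvPolynomial.X i₀) ^ m else X i with hX'def
  -- degrees
  have hdeg' : ∀ i, (X' i).totalDegree ≤ m := by
    intro i
    show (if i = i₁ then X i₁ + MvPolynomial.C δ * (MvPolynomial.X i₀) ^ m else X i).totalDegree ≤ m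
    split
    · refine le_trans (MvPolynomial.totalDegree_add _ _) (max_le (hX i₁) ?_)
      refine le_trans (MvPolynomial.totalDegree_mul _ _) ?_
      simp [MvPolynomial.totalDegree_C]
    · exact hX i
  -- the single-variable polynomial along the line
  set Q : Polynomial ℝ := P + Polynomial.C δ * Polynomial.X ^ m with hQ
  have hQaeval : MvPolynomial.aeval σp (X' i₁) = Q := by
    rw [hX'def, hQ, hP]
    simp [map_add, map_mul, map_pow, hσp]
  have hQcoeff : Q.coeff m = a + δ := by
    rw [hQ, ha]
    simp [Polynomial.coeff_add, Polynomial.coeff_C_mul, Polynomial.coeff_X_pow]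
  have hQne : Q ≠ 0 := fun h => hsum (by rw [← hQcoeff, h]; simp)
  have hQdeg : m ≤ Q.natDegree := Polynomial.le_natDegree_of_ne_zero (by rw [hQcoeff]; exact hsum)
  set L : ℝ := |Q.leadingCoeff| with hL
  have hLpos : 0 < L := abs_pos.mpr (Polynomial.leadingCoeff_ne_zero.mpr hQne)
  -- growth bounds
  obtain ⟨C₀, hC₀, hC₀b⟩ := growthBound n m i₀ (X' i₀) (hdeg' i₀)
  obtain ⟨C₁, hC₁, hC₁b⟩ := growthBound n m i₀ (X' i₁) (hdeg' i₁)
  -- eventually facts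
  have E3 : ∀ᶠ t : ℝ in Filter.atTop, (L / 2) * t ^ Q.natDegree ≤ |Q.eval t| := by
    have h := Q.isEquivalent_atTop_lead
    have h2 := h.isLittleO.def (by norm_num : (0:ℝ) < 1/2)
    filter_upwards [h2, Filter.eventually_ge_atTop (0:ℝ)] with t ht ht0
    simp only [Pi.sub_apply, Real.norm_eq_abs] at ht
    have habs : |Q.leadingCoeff * t ^ Q.natDegree| = L * t ^ Q.natDegree := by
      rw [abs_mul, abs_pow, abs_of_nonneg ht0]
    have h3 := abs_sub_abs_le_abs_sub (Q.leadingCoeff * t ^ Q.natDegree) (Q.eval t)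
    rw [habs, abs_sub_comm] at h3
    rw [habs] at ht
    linarith
  have E4 : ∀ᶠ t : ℝ in Filter.atTop, 2 * (R * (C₀ + C₁)) / L < t :=
    Filter.eventually_gt_atTop _
  obtain ⟨t, ht⟩ := ((Filter.eventually_gt_atTop R).and ((Filter.eventually_ge_atTop (1:ℝ)).and
    (E3.and E4))).exists
  obtain ⟨htR, ht1, htQ, htcmp⟩ := ht
  have ht0 : (0:ℝ) < t := lt_of_lt_of_le one_pos ht1
  -- the point p
  set eqv := EuclideanSpace.equiv (Fin n) ℝ with heqv
  set p : EuclideanSpace ℝ (Fin n) := EuclideanSpace.single i₀ t with hp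
  have hpline : (eqv p : Fin n → ℝ) = fun j => if j = i₀ then t else 0 := by
    funext j
    show p j = _
    rw [hp, EuclideanSpace.single_apply]
  set vfun : Fin n → ℝ := fun i => MvPolynomial.eval (eqv p) (X' i) with hvfun
  have vQ : vfun i₁ = Q.eval t := by
    rw [hvfun]
    simp only [hpline]
    rw [← evalLine n i₀ (X' i₁) t, ← hσp, hQaeval]
  have hvb : ∀ i ∈ ({i₀, i₁} : Set (Fin n)), True := fun _ _ => trivial
  have hv₀ : |vfun i₀| ≤ C₀ * t ^ m := by
    rw [hvfun]; simp only [hpline]; exact hC₀b t ht1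
  have hv₁ : |vfun i₁| ≤ C₁ * t ^ m := by
    rw [hvfun]; simp only [hpline]; exact hC₁b t ht1
  have htm : (0:ℝ) < t ^ m := pow_pos ht0 m
  have hQlow : (L / 2) * t ^ m ≤ |Q.eval t| := by
    refine le_trans ?_ htQ
    have := pow_le_pow_right₀ ht1 hQdeg
    nlinarith
  have hQtne : Q.eval t ≠ 0 := by
    intro h
    rw [h, abs_zero] at hQlow
    nlinarith
  have key : R * (|Q.eval t| + |vfun i₀|) < t * |Q.eval t| := by
    have hcmp : R * (C₀ + C₁) < t * (L / 2) := by
      rw [div_lt_iff₀ hLpos] at htcmp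
      linarith
    have hQub : |Q.eval t| ≤ C₁ * t ^ m := vQ ▸ hv₁
    have h1 := mul_le_mul_of_nonneg_left (add_le_add hQub hv₀) hR.le
    have h2 := mul_le_mul_of_nonneg_left hQlow ht0.le
    have h3 := mul_lt_mul_of_pos_right hcmp htm
    linarith [h1, h2, h3]
  -- the linear functional
  set f : EuclideanSpace ℝ (Fin n) →ₗ[ℝ] ℝ :=
    (Q.eval t) • (PiLp.proj 2 (fun _ : Fin n => ℝ) i₀ : EuclideanSpace ℝ (Fin n) →L[ℝ] ℝ).toLinearMap
      - (vfun i₀) • (PiLp.proj 2 (fun _ : Fin n => ℝ) i₁ :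
          EuclideanSpace ℝ (Fin n) →L[ℝ] ℝ).toLinearMap with hf
  have hfapp : ∀ y : EuclideanSpace ℝ (Fin n),
      f y = Q.eval t * (eqv y) i₀ - vfun i₀ * (eqv y) i₁ := by
    intro y
    simp [hf, heqv, PiLp.proj_apply, PiLp.continuousLinearEquiv_apply,
      smul_eq_mul]
  have hpc₀ : (eqv p) i₀ = t := by rw [hpline]; simp
  have hpc₁ : (eqv p) i₁ = 0 := by rw [hpline]; simp [hne]
  have hfp : f p = t * Q.eval t := by
    rw [hfapp, hpc₀, hpc₁, mul_zero, sub_zero, mul_comm]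
  refine ⟨X', hdeg', ?_, p, ?_, ?_, f, t * Q.eval t, ?_, ?_, ?_⟩
  · -- closeness
    intro x hx
    have hxR : ‖x‖ ≤ R := by
      rw [Metric.mem_closedBall, dist_zero_right] at hx; exact hx
    have hx0 : |(eqv x) i₀| ≤ R := le_trans (coordBound n x i₀) hxR
    have hdiff : (eqv.symm fun i => MvPolynomial.eval (eqv x) (X' i)) -
        (eqv.symm fun i => MvPolynomial.eval (eqv x) (X i)) =
        EuclideanSpace.single i₁ (δ * ((eqv x) i₀) ^ m) := by
      apply eqv.injective
      rw [map_sub]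
      simp only [ContinuousLinearEquiv.apply_symm_apply]
      funext j
      show MvPolynomial.eval (eqv x) (X' j) - MvPolynomial.eval (eqv x) (X j) =
        EuclideanSpace.single i₁ (δ * ((eqv x) i₀) ^ m) j
      rw [EuclideanSpace.single_apply, hX'def]
      by_cases hj : j = i₁
      · subst hj
        simp [MvPolynomial.eval_mul, MvPolynomial.eval_pow]
      · simp [hj]
    rw [hdiff, EuclideanSpace.norm_single, Real.norm_eq_abs, abs_mul, abs_pow,
      abs_of_pos hδpos]
    have h1 : |(eqv x) i₀| ^ m ≤ R ^ m := pow_le_pow_left₀ (abs_nonneg _) hx0 m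
    have h2 : δ * |(eqv x) i₀| ^ m ≤ d₀ * R ^ m := by nlinarith [pow_nonneg (abs_nonneg ((eqv x) i₀)) m]
    have h3 : d₀ * R ^ m = ε / 2 := by
      rw [hd₀def]; field_simp
    linarith
  · -- p outside the ball
    rw [Metric.mem_closedBall, dist_zero_right, hp, EuclideanSpace.norm_single,
      Real.norm_eq_abs, abs_of_pos ht0]
    exact not_le.mpr htR
  · -- regular point
    intro h
    have h2 := congrArg eqv h
    rw [ContinuousLinearEquiv.apply_symm_apply, map_zero] at h2
    exact hQtne (by rw [← vQ, hvfun]; exact congrFun h2 i₁)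
  · -- f ≠ 0
    intro h
    have : f p = 0 := by rw [h]; rfl
    rw [hfp] at this
    exact hQtne (by nlinarith [mul_pos ht0 (abs_pos.mpr hQtne)])
  · -- the line lies in the hyperplane
    intro lam
    rw [map_add, map_smul, hfp, smul_eq_mul]
    have hfv : f (eqv.symm vfun) = 0 := by
      rw [hfapp]
      simp only [ContinuousLinearEquiv.apply_symm_apply]
      rw [vQ]; ring
    rw [hfv, mul_zero, add_zero]
  · -- hyperplane misses the ball
    intro x hx heq
    have hxR : ‖x‖ ≤ R := by
      rw [Metric.mem_closedBall, dist_zero_right] at hx; exact hx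
    have hx0 : |(eqv x) i₀| ≤ R := le_trans (coordBound n x i₀) hxR
    have hx1 : |(eqv x) i₁| ≤ R := le_trans (coordBound n x i₁) hxR
    have hb : |f x| ≤ R * (|Q.eval t| + |vfun i₀|) := by
      rw [hfapp]
      calc |Q.eval t * (eqv x) i₀ - vfun i₀ * (eqv x) i₁|
          ≤ |Q.eval t * (eqv x) i₀| + |vfun i₀ * (eqv x) i₁| := by
            rw [sub_eq_add_neg]
            exact le_trans (abs_add_le _ _) (by rw [abs_neg])
        _ ≤ R * (|Q.eval t| + |vfun i₀|) := by
            rw [abs_mul, abs_mul]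
            nlinarith [abs_nonneg (Q.eval t), abs_nonneg (vfun i₀), abs_nonneg ((eqv x) i₀),
              abs_nonneg ((eqv x) i₁)]
    have hc : |t * Q.eval t| = t * |Q.eval t| := by
      rw [abs_mul, abs_of_pos ht0]
    have : |f x| < |t * Q.eval t| := by rw [hc]; exact lt_of_le_of_lt hb key
    rw [heq] at this
    exact lt_irrefl _ this
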